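/- Let Δ be the convex hull of {(0,0)} together with the graph C of a concave, continuous, piecewise-linear function f: [0,b] → ℝ₊ with f(0) = a ≥ f(1), f(b) = 0, whose segments have lattice-point endpoints, where 1 ≤ a ≤ b. If Δ ≠ aΣ, then lw(Δ) = a. -/

import Mathlib

open Set

def toR2 (q : ℤ × ℤ) : ℝ × ℝ := ((q.1 : ℝ), (q.2 : ℝ))

def isLatticePt (p : ℝ × ℝ) : Prop := ∃ q : ℤ × ℤ, p = toR2 q

def IsLatticePolygon (Δ : Set (ℝ × ℝ)) : Prop :=
  ∃ S : Finset (ℤ × ℤ), Δ = convexHull ℝ (toR2 '' ↑S)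

def IsZAffine (φ : ℝ × ℝ → ℝ × ℝ) : Prop :=
  ∃ a b c d e f : ℤ, (a * d - b * c = 1 ∨ a * d - b * c = -1) ∧
    ∀ p : ℝ × ℝ, φ p = ((a : ℝ) * p.1 + (b : ℝ) * p.2 + (e : ℝ),
      (c : ℝ) * p.1 + (d : ℝ) * p.2 + (f : ℝ))

def widthLE (Δ : Set (ℝ × ℝ)) (s : ℤ) : Prop :=
  ∃ φ, IsZAffine φ ∧ ∀ p ∈ Δ, 0 ≤ (φ p).2 ∧ (φ p).2 ≤ (s : ℝ)

open Classical in
noncomputable def latticeWidth (Δ : Set (ℝ × ℝ)) : ℤ :=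
  if Δ = ∅ then -1 else sInf {s : ℤ | 0 ≤ s ∧ widthLE Δ s}

def simplexPoly (d : ℤ) : Set (ℝ × ℝ) :=
  convexHull ℝ {((0:ℝ), (0:ℝ)), ((d:ℝ), (0:ℝ)), ((0:ℝ), (d:ℝ))}

def interiorPoly (Δ : Set (ℝ × ℝ)) : Set (ℝ × ℝ) :=
  convexHull ℝ {p | p ∈ interior Δ ∧ isLatticePt p}

def equivPoly (Δ Δ' : Set (ℝ × ℝ)) : Prop :=
  ∃ φ, IsZAffine φ ∧ φ '' Δ = Δ'

def TwoDim (Δ : Set (ℝ × ℝ)) : Prop := affineSpan ℝ Δ = ⊤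

/-- Let Δ be the convex hull of (0,0) together with the graph of a concave, continuous,
piecewise-linear function f : [0,b] → ℝ₊ with f(0) = a ≥ f(1), f(b) = 0, whose segments
have lattice-point endpoints, where 1 ≤ a ≤ b.  If Δ ≠ aΣ then lw(Δ) = a. -/
theorem lw_of_concave_graph_polygon (a b : ℤ) (ha : 1 ≤ a) (hab : a ≤ b)
    (f : ℝ → ℝ) (n : ℕ) (x y : Fin (n + 1) → ℤ)
    (hx0 : x 0 = 0) (hxn : x (Fin.last n) = b)
    (hxmono : StrictMono x)
    (hy0 : y 0 = a) (hyn : y (Fin.last n) = 0)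
    (hval : ∀ i, f ((x i : ℝ)) = (y i : ℝ))
    (hlin : ∀ i : Fin n, ∀ t ∈ Set.Icc ((x i.castSucc : ℝ)) ((x i.succ : ℝ)),
      f t = (y i.castSucc : ℝ) +
        ((y i.succ : ℝ) - (y i.castSucc : ℝ)) / ((x i.succ : ℝ) - (x i.castSucc : ℝ)) *
          (t - (x i.castSucc : ℝ)))
    (hconc : ConcaveOn ℝ (Set.Icc (0 : ℝ) (b : ℝ)) f)
    (hpos : ∀ t ∈ Set.Icc (0 : ℝ) (b : ℝ), 0 ≤ f t)
    (hf1 : f 1 ≤ (a : ℝ))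
    (Δ : Set (ℝ × ℝ))
    (hΔ : Δ = convexHull ℝ
      (insert ((0:ℝ), (0:ℝ)) {p : ℝ × ℝ | ∃ t ∈ Set.Icc (0 : ℝ) (b : ℝ), p = (t, f t)}))
    (hne : Δ ≠ simplexPoly a) :
    latticeWidth Δ = a := by
    -- basic numeric facts
  have hb1 : (1:ℤ) ≤ b := ha.trans hab
  have haR : (1:ℝ) ≤ (a:ℝ) := by exact_mod_cast ha
  have hbR : (0:ℝ) < (b:ℝ) := by exact_mod_cast lt_of_lt_of_le one_pos hb1
  have habR : (a:ℝ) ≤ (b:ℝ) := by exact_mod_cast hab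
  have hf0 : f 0 = (a:ℝ) := by
    have := hval 0
    rw [hx0, hy0] at this
    simpa using this
  have hfb : f (b:ℝ) = 0 := by
    have := hval (Fin.last n)
    rw [hxn, hyn] at this
    simpa using this
  -- f ≤ a on [0,b]
  have hfle : ∀ t ∈ Set.Icc (0:ℝ) (b:ℝ), f t ≤ (a:ℝ) := by
    obtain ⟨m, rfl⟩ : ∃ m, n = m + 1 := by
      rcases n with _ | m
      · exfalso
        have hb0 : x (Fin.last 0) = 0 := by simpa [Fin.last] using hx0
        rw [hxn] at hb0
        omega
      · exact ⟨m, rfl⟩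
    have hx1 : (1:ℤ) ≤ x 1 := by
      have h01 : (0 : Fin (m + 2)) < 1 := by
        simp [Fin.lt_def]
      have := hxmono h01
      rw [hx0] at this
      omega
    have hx1R : (1:ℝ) ≤ ((x 1 : ℤ):ℝ) := by exact_mod_cast hx1
    have hlin0 := hlin 0
    rw [Fin.castSucc_zero, Fin.succ_zero_eq_one, hx0, hy0] at hlin0
    push_cast at hlin0
    intro t ht
    by_cases htl : t ≤ 1
    · -- linear piece
      have h1 : t ∈ Set.Icc (0:ℝ) ((x 1 : ℤ):ℝ) := ⟨ht.1, le_trans htl hx1R⟩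
      have hft := hlin0 t h1
      have hf1' := hlin0 1 ⟨zero_le_one, hx1R⟩
      simp only [sub_zero] at hft hf1'
      rw [hf1'] at hf1
      have hslope : ((y 1 : ℤ):ℝ) - (a:ℝ) ≤ 0 := by
        by_contra hc
        push_neg at hc
        have hx1pos : (0:ℝ) < ((x 1:ℤ):ℝ) := by linarith
        have : 0 < (((y 1:ℤ):ℝ) - (a:ℝ)) / ((x 1:ℤ):ℝ) := div_pos hc hx1pos
        nlinarith
      rw [hft]
      have hx1pos : (0:ℝ) < ((x 1:ℤ):ℝ) := by linarith
      have hsl : (((y 1:ℤ):ℝ) - (a:ℝ)) / ((x 1:ℤ):ℝ) ≤ 0 :=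
        div_nonpos_of_nonpos_of_nonneg hslope hx1pos.le
      nlinarith [ht.1]
    · -- concavity for t > 1
      push_neg at htl
      have htpos : (0:ℝ) < t := by linarith
      have h0m : (0:ℝ) ∈ Set.Icc (0:ℝ) (b:ℝ) := ⟨le_refl _, hbR.le⟩
      have key := hconc.2 h0m ht (show (0:ℝ) ≤ 1 - 1/t by
          rw [sub_nonneg]; exact div_le_one_of_le₀ htl.le htpos.le)
        (show (0:ℝ) ≤ 1/t by positivity) (by ring)
      have harg : (1 - 1/t) • (0:ℝ) + (1/t) • t = 1 := by
        simp only [smul_eq_mul, mul_zero, zero_add]; exact one_div_mul_cancel htpos.ne'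
      rw [harg] at key
      simp only [smul_eq_mul, hf0] at key
      have key' : (1 - 1/t) * (a:ℝ) + (1/t) * f t ≤ (a:ℝ) := le_trans key hf1
      have := mul_le_mul_of_nonneg_left key' htpos.le
      have htne : t ≠ 0 := htpos.ne'
      have hexp : t * ((1 - 1/t) * (a:ℝ) + (1/t) * f t) = (t - 1) * (a:ℝ) + f t := by
        field_simp
      rw [hexp] at this
      nlinarith
  -- key points of Δ
  have hconvΔ : Convex ℝ Δ := by rw [hΔ]; exact convex_convexHull ℝ _
  have h00 : ((0:ℝ), (0:ℝ)) ∈ Δ := by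
    rw [hΔ]; exact subset_convexHull ℝ _ (Set.mem_insert _ _)
  have h0a : ((0:ℝ), (a:ℝ)) ∈ Δ := by
    rw [hΔ]
    refine subset_convexHull ℝ _ (Set.mem_insert_iff.2 (Or.inr ⟨0, ⟨le_refl _, hbR.le⟩, ?_⟩))
    rw [hf0]
  have hbb0 : ((b:ℝ), (0:ℝ)) ∈ Δ := by
    rw [hΔ]
    refine subset_convexHull ℝ _ (Set.mem_insert_iff.2 (Or.inr ⟨(b:ℝ), ⟨hbR.le, le_refl _⟩, ?_⟩))
    rw [hfb]
  have ha0 : ((a:ℝ), (0:ℝ)) ∈ Δ := by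
    have hcomb := hconvΔ h00 hbb0 (show (0:ℝ) ≤ 1 - (a:ℝ)/(b:ℝ) by
        rw [sub_nonneg]; exact div_le_one_of_le₀ habR hbR.le)
      (show (0:ℝ) ≤ (a:ℝ)/(b:ℝ) by positivity) (by ring)
    have : (1 - (a:ℝ)/(b:ℝ)) • ((0:ℝ), (0:ℝ)) + ((a:ℝ)/(b:ℝ)) • ((b:ℝ), (0:ℝ))
        = ((a:ℝ), (0:ℝ)) := by
      rw [Prod.ext_iff]
      constructor
      · show (1 - (a:ℝ)/(b:ℝ)) * 0 + ((a:ℝ)/(b:ℝ)) * (b:ℝ) = (a:ℝ)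
        field_simp
        ring
      · show (1 - (a:ℝ)/(b:ℝ)) * 0 + ((a:ℝ)/(b:ℝ)) * 0 = 0
        ring
    rwa [this] at hcomb
  -- upper bound: widthLE Δ a
  have hup : widthLE Δ a := by
    refine ⟨fun p => (p.1, p.2), ⟨1, 0, 0, 1, 0, 0, Or.inl (by ring), fun p => by norm_num⟩, ?_⟩
    have hsub : Δ ⊆ {p : ℝ × ℝ | 0 ≤ p.2 ∧ p.2 ≤ (a:ℝ)} := by
      rw [hΔ]
      apply convexHull_min
      · rintro p hp
        simp only [Set.mem_insert_iff, Set.mem_setOf_eq] at hp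
        rcases hp with rfl | ⟨t, ht, rfl⟩
        · refine ⟨le_refl _, ?_⟩
          show (0:ℝ) ≤ (a:ℝ)
          linarith
        · exact ⟨hpos t ht, hfle t ht⟩
      · intro p hp q hq u v hu hv huv
        constructor
        · have : (u • p + v • q).2 = u * p.2 + v * q.2 := rfl
          rw [this]
          nlinarith [hp.1, hq.1]
        · have : (u • p + v • q).2 = u * p.2 + v * q.2 := rfl
          rw [this]
          nlinarith [hp.2, hq.2]
    exact fun p hp => hsub hp
  -- lower bound
  have hlow : ∀ s ∈ {s : ℤ | 0 ≤ s ∧ widthLE Δ s}, a ≤ s := by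
    rintro s ⟨hs0, φ, ⟨A, B, C, D, E, F, hdet, hφ⟩, hbnd⟩
    have h1 := hbnd _ h00
    have h2 := hbnd _ ha0
    have h3 := hbnd _ h0a
    rw [hφ] at h1 h2 h3
    norm_num at h1 h2 h3
    have hF0 : (0:ℝ) ≤ (F:ℝ) := by exact_mod_cast h1.1
    have hFs : (F:ℝ) ≤ (s:ℝ) := by exact_mod_cast h1.2
    have hCD : C ≠ 0 ∨ D ≠ 0 := by
      by_contra hc
      push_neg at hc
      rw [hc.1, hc.2] at hdet
      simp at hdet
    have goal : (a:ℝ) ≤ (s:ℝ) := by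
      rcases hCD with hC | hD
      · have hC1 : 1 ≤ C ∨ C ≤ -1 := by omega
        rcases hC1 with h | h
        · have hCR : (1:ℝ) ≤ (C:ℝ) := by exact_mod_cast h
          nlinarith [hF0, h2.2, mul_nonneg (by linarith : (0:ℝ) ≤ (C:ℝ) - 1) (by linarith : (0:ℝ) ≤ (a:ℝ))]
        · have hCR : (C:ℝ) ≤ -1 := by exact_mod_cast h
          nlinarith [h2.1, hFs, mul_nonneg (by linarith : (0:ℝ) ≤ -(C:ℝ) - 1) (by linarith : (0:ℝ) ≤ (a:ℝ))]
      · have hD1 : 1 ≤ D ∨ D ≤ -1 := by omega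
        rcases hD1 with h | h
        · have hDR : (1:ℝ) ≤ (D:ℝ) := by exact_mod_cast h
          nlinarith [hF0, h3.2, mul_nonneg (by linarith : (0:ℝ) ≤ (D:ℝ) - 1) (by linarith : (0:ℝ) ≤ (a:ℝ))]
        · have hDR : (D:ℝ) ≤ -1 := by exact_mod_cast h
          nlinarith [h3.1, hFs, mul_nonneg (by linarith : (0:ℝ) ≤ -(D:ℝ) - 1) (by linarith : (0:ℝ) ≤ (a:ℝ))]
    exact_mod_cast goal
  -- conclude
  have hΔne : Δ ≠ ∅ := Set.nonempty_iff_ne_empty.mp ⟨_, h00⟩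
  rw [latticeWidth, if_neg hΔne]
  have hmem : a ∈ {s : ℤ | 0 ≤ s ∧ widthLE Δ s} := ⟨by omega, hup⟩
  exact le_antisymm (csInf_le ⟨a, fun s hs => hlow s hs⟩ hmem) (le_csInf ⟨a, hmem⟩ hlow)
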